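/- The polynomial −3625·p₁⁴ + 1590·p₁³p₂ + 7129·p₁²p₂² − 50·p₁²p₀² + 8866·p₁p₂³ + 304·p₁p₂p₀² − 8049·p₂⁴ − 14·p₂²p₀² + p₀⁴, viewed as an element of ℂ[p₀,p₁,p₂], is irreducible. -/

import Mathlib

open MvPolynomial

/-- The homogenized slowness polynomial of the two-dimensional stiffness tensor with Voigt
parameters `(20, 39, −65, −16, −87, 30)`, as an element of `ℂ[p₀,p₁,p₂]` (with `p₀ = X 0`,
`p₁ = X 1`, `p₂ = X 2`). -/
noncomputable def slownessPolyExample2D : MvPolynomial (Fin 3) ℂ :=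
  C (-3625) * X 1 ^ 4 + C 1590 * X 1 ^ 3 * X 2 + C 7129 * X 1 ^ 2 * X 2 ^ 2
    + C (-50) * X 1 ^ 2 * X 0 ^ 2 + C 8866 * X 1 * X 2 ^ 3 + C 304 * X 1 * X 2 * X 0 ^ 2
    + C (-8049) * X 2 ^ 4 + C (-14) * X 2 ^ 2 * X 0 ^ 2 + X 0 ^ 4

namespace SlownessAux

section Univariate
open Polynomial

/-- A polynomial over `ℂ` of positive degree admitting a Bézout certificate
`u*d + v*d' = C N ≠ 0` with its derivative is squarefree; in particular it is not a square. -/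
lemma not_square_of_bezout (d d' u v : Polynomial ℂ) (N : ℂ) (hN : N ≠ 0)
    (hd' : derivative d = d')
    (hB : u * d + v * d' = Polynomial.C N)
    (hdeg : d.natDegree ≠ 0) : ∀ s : Polynomial ℂ, s ^ 2 ≠ d := by
  intro s hs
  have hsd : s ∣ d := by rw [← hs, sq]; exact dvd_mul_right s s
  have hsd' : s ∣ d' := by
    rw [← hd', ← hs, derivative_pow]
    exact ⟨Polynomial.C 2 * derivative s, by push_cast; ring⟩
  have hdvd : s ∣ Polynomial.C N := by
    rw [← hB]; exact dvd_add (hsd.mul_left u) (hsd'.mul_left v)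
  have hCN : Polynomial.C N ≠ 0 := by simpa using hN
  have h0 : s.natDegree = 0 := by
    have := Polynomial.natDegree_le_of_dvd hdvd hCN
    simpa using this
  have : d.natDegree = 0 := by
    rw [← hs, Polynomial.natDegree_pow, h0, mul_zero]
  exact hdeg this

noncomputable def dD : Polynomial ℂ :=
  17000 * Polynomial.X ^ 4 - 36760 * Polynomial.X ^ 3 + 65300 * Polynomial.X ^ 2 - 43976 * Polynomial.X + 32392

noncomputable def dB : Polynomial ℂ :=
  -3625 * Polynomial.X ^ 4 + 1590 * Polynomial.X ^ 3 + 7129 * Polynomial.X ^ 2 + 8866 * Polynomial.X - 8049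

lemma dD_deriv : derivative dD = 68000 * Polynomial.X ^ 3 - 110280 * Polynomial.X ^ 2 + 130600 * Polynomial.X - 43976 := by
  unfold dD
  simp only [derivative_add, derivative_sub, derivative_mul, derivative_X_pow, derivative_X,
    derivative_ofNat, derivative_one]
  push_cast
  simp only [map_ofNat]
  ring

lemma dB_deriv : derivative dB = -14500 * Polynomial.X ^ 3 + 4770 * Polynomial.X ^ 2 + 14258 * Polynomial.X + 8866 := by
  unfold dB
  simp only [derivative_add, derivative_sub, derivative_neg, derivative_mul, derivative_X_pow,
    derivative_X, derivative_ofNat, derivative_one]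
  push_cast
  simp only [map_ofNat]
  ring

lemma dD_natDegree : dD.natDegree = 4 := by unfold dD; compute_degree!

lemma dB_natDegree : dB.natDegree = 4 := by unfold dB; compute_degree!

lemma dD_not_square : ∀ s : Polynomial ℂ, s ^ 2 ≠ dD := by
  apply not_square_of_bezout dD _ (-86849803841883000 * Polynomial.X ^ 2 - 45872200765687570 * Polynomial.X
      + 104138206176583640)
    (21712450960470750 * Polynomial.X ^ 3 - 269445357209060 * Polynomial.X ^ 2 - 9568822701531355 * Polynomial.X
      + 43221099042121371) 1472553722995567855784 (by norm_num) dD_deriv ?_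
    (by rw [dD_natDegree]; norm_num)
  rw [show ((1472553722995567855784 : ℂ)) = ((1472553722995567855784 : ℕ) : ℂ) by push_cast; ring]
  rw [map_natCast]
  unfold dD
  push_cast
  ring

lemma dB_not_square : ∀ s : Polynomial ℂ, s ^ 2 ≠ dB := by
  apply not_square_of_bezout dB _ (37110250446500 * Polynomial.X ^ 2 + 24524806821410 * Polynomial.X
      - 40167094292356)
    (-9277562611625 * Polynomial.X ^ 3 - 5113868977595 * Polynomial.X ^ 2 + 20171482230983 * Polynomial.X
      + 26278669283326) 556291623825141760 (by norm_num) dB_deriv ?_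
    (by rw [dB_natDegree]; norm_num)
  rw [show ((556291623825141760 : ℂ)) = ((556291623825141760 : ℕ) : ℂ) by push_cast; ring]
  rw [map_natCast]
  unfold dB
  push_cast
  ring

end Univariate

section Field
open Polynomial

lemma eq_quadratic {K : Type*} [CommRing K] {g : K[X]} (h1 : g.Monic) (h2 : g.natDegree = 2) :
    g = Polynomial.X ^ 2 + Polynomial.C (g.coeff 1) * Polynomial.X + Polynomial.C (g.coeff 0) := by
  ext n
  rcases n with _ | _ | _ | n
  · simp
  · simp
  · have hc : g.coeff 2 = 1 := by
      have := h1.coeff_natDegree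
      rwa [h2] at this
    simp [hc, Polynomial.coeff_X_pow]
  · have hlt : g.natDegree < n + 3 := by omega
    rw [Polynomial.coeff_eq_zero_of_natDegree_lt hlt]
    simp [Polynomial.coeff_X_pow, Polynomial.coeff_X]

/-- A biquadratic `X⁴ + aX² + b` over a field is irreducible provided neither `a² - 4b`
nor `b` is a square. -/
lemma quartic_key {K : Type*} [Field K] (a b : K)
    (hD : ∀ s : K, s ^ 2 ≠ a ^ 2 - 4 * b) (hb : ∀ s : K, s ^ 2 ≠ b) :
    Irreducible (Polynomial.X ^ 4 + Polynomial.C a * Polynomial.X ^ 2 + Polynomial.C b : K[X]) := by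
  set f : K[X] := Polynomial.X ^ 4 + Polynomial.C a * Polynomial.X ^ 2 + Polynomial.C b with hf
  have hmon : f.Monic := by
    unfold f; monicity!
  have hdeg : f.natDegree = 4 := by
    unfold f; compute_degree!
  have hnoroot : ∀ r : K, ¬f.IsRoot r := by
    intro r hr
    have h1 : r ^ 4 + a * r ^ 2 + b = 0 := by
      simpa [hf, IsRoot] using hr
    exact hD (2 * r ^ 2 + a) (by linear_combination 4 * h1)
  have hroot1 : ∀ p q : K[X], f = p * q → p.natDegree = 1 → False := by
    intro p q hpq hp1
    have hp0 : p ≠ 0 := by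
      intro h; rw [h] at hp1; simp at hp1
    have hc1 : p.coeff 1 ≠ 0 := by
      have := Polynomial.leadingCoeff_ne_zero.mpr hp0
      rwa [Polynomial.leadingCoeff, hp1] at this
    have hp' : p = Polynomial.C (p.coeff 1) * Polynomial.X + Polynomial.C (p.coeff 0) :=
      eq_X_add_C_of_natDegree_le_one (le_of_eq hp1)
    apply hnoroot (-(p.coeff 0) / p.coeff 1)
    have hev : eval (-(p.coeff 0) / p.coeff 1) p = 0 := by
      conv_lhs => arg 2; rw [hp']
      simp only [Polynomial.eval_add, Polynomial.eval_mul, Polynomial.eval_C, Polynomial.eval_X]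
      field_simp
      ring
    rw [IsRoot, hpq, Polynomial.eval_mul, hev, zero_mul]
  rw [hf]
  constructor
  · intro hu
    have := natDegree_eq_zero_of_isUnit hu
    rw [← hf, hdeg] at this
    omega
  · intro g h hgh
    rw [← hf] at hgh
    by_contra hc
    push_neg at hc
    obtain ⟨hg, hh⟩ := hc
    have hg0 : g ≠ 0 := by rintro rfl; exact hmon.ne_zero (by simpa using hgh)
    have hh0 : h ≠ 0 := by rintro rfl; exact hmon.ne_zero (by simpa using hgh)
    have hsum : g.natDegree + h.natDegree = 4 := by
      rw [← hdeg, hgh, natDegree_mul hg0 hh0]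
    have hunit : ∀ p : K[X], p ≠ 0 → ¬IsUnit p → 1 ≤ p.natDegree := by
      intro p hp0 hpu
      rcases Nat.eq_zero_or_pos p.natDegree with h0 | h1
      · exfalso; apply hpu
        obtain ⟨c, hcg⟩ := Polynomial.natDegree_eq_zero.mp h0
        have hc0 : c ≠ 0 := by rintro rfl; exact hp0 (by simp [← hcg])
        rw [← hcg]; exact Polynomial.isUnit_C.mpr (isUnit_iff_ne_zero.mpr hc0)
      · exact h1
    have hg1 := hunit g hg0 hg
    have hh1 := hunit h hh0 hh
    -- g has degree 1, 2, or 3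
    rcases (by omega : g.natDegree = 1 ∨ g.natDegree = 3 ∨ g.natDegree = 2) with h1 | h3 | h2
    · exact hroot1 g h hgh h1
    · exact hroot1 h g (by rw [hgh, mul_comm]) (by omega)
    · -- both quadratic; monicize
      have hh2 : h.natDegree = 2 := by omega
      have hlc : g.leadingCoeff * h.leadingCoeff = 1 := by
        have := hmon
        rw [hgh] at this
        rwa [Monic, leadingCoeff_mul] at this
      have hglc : g.leadingCoeff ≠ 0 := leadingCoeff_ne_zero.mpr hg0
      have hhlc : h.leadingCoeff ≠ 0 := leadingCoeff_ne_zero.mpr hh0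
      set G : K[X] := Polynomial.C h.leadingCoeff * g with hGdef
      set H : K[X] := Polynomial.C g.leadingCoeff * h with hHdef
      have hGH : f = G * H := by
        rw [hgh, hGdef, hHdef]
        calc g * h = Polynomial.C (g.leadingCoeff * h.leadingCoeff) * (g * h) := by
              rw [hlc]; simp
          _ = Polynomial.C h.leadingCoeff * g * (Polynomial.C g.leadingCoeff * h) := by
              rw [Polynomial.C_mul]; ring
      have hG2 : G.natDegree = 2 := by rw [hGdef, natDegree_C_mul hhlc, h2]
      have hH2 : H.natDegree = 2 := by rw [hHdef, natDegree_C_mul hglc, hh2]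
      have hGmon : G.Monic := by
        rw [Monic, hGdef, leadingCoeff_mul, leadingCoeff_C, mul_comm]
        exact hlc
      have hHmon : H.Monic := by
        rw [Monic, hHdef, leadingCoeff_mul, leadingCoeff_C]
        exact hlc
      set p : K := G.coeff 1
      set q : K := G.coeff 0
      set u : K := H.coeff 1
      set v : K := H.coeff 0
      have heq2 : Polynomial.X ^ 4 + Polynomial.C a * Polynomial.X ^ 2 + Polynomial.C b
          = (Polynomial.X ^ 2 + Polynomial.C p * Polynomial.X + Polynomial.C q) * (Polynomial.X ^ 2 + Polynomial.C u * Polynomial.X + Polynomial.C v) := by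
        rw [← eq_quadratic hGmon hG2, ← eq_quadratic hHmon hH2, ← hGH, hf]
      have hexp : (Polynomial.X ^ 2 + Polynomial.C p * Polynomial.X + Polynomial.C q) * (Polynomial.X ^ 2 + Polynomial.C u * Polynomial.X + Polynomial.C v)
          = Polynomial.X ^ 4 + Polynomial.C (p + u) * Polynomial.X ^ 3 + Polynomial.C (q + v + p * u) * Polynomial.X ^ 2
            + Polynomial.C (p * v + q * u) * Polynomial.X ^ 1 + Polynomial.C (q * v) * Polynomial.X ^ 0 := by
        simp only [Polynomial.C_add, Polynomial.C_mul]; ring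
      rw [hexp] at heq2
      have e3 : (0 : K) = p + u := by
        have := congrArg (fun r => Polynomial.coeff r 3) heq2
        simp only [Polynomial.coeff_add, Polynomial.coeff_C_mul, Polynomial.coeff_X_pow, Polynomial.coeff_C] at this
        norm_num at this
        linear_combination this
      have e2 : a = q + v + p * u := by
        have := congrArg (fun r => Polynomial.coeff r 2) heq2
        simp only [Polynomial.coeff_add, Polynomial.coeff_C_mul, Polynomial.coeff_X_pow, Polynomial.coeff_C] at this
        norm_num at this
        linear_combination this
      have e1 : (0 : K) = p * v + q * u := by
        have := congrArg (fun r => Polynomial.coeff r 1) heq2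
        simp only [Polynomial.coeff_add, Polynomial.coeff_C_mul, Polynomial.coeff_X_pow, Polynomial.coeff_C] at this
        norm_num at this
        linear_combination this
      have e0 : b = q * v := by
        have := congrArg (fun r => Polynomial.coeff r 0) heq2
        simp only [Polynomial.coeff_add, Polynomial.coeff_C_mul, Polynomial.coeff_X_pow, Polynomial.coeff_C] at this
        norm_num at this
        linear_combination this
      have key : p * (v - q) = 0 := by linear_combination -e1 + q * e3
      rcases mul_eq_zero.mp key with hp0 | hvq
      · exact hD (q - v)
          (by linear_combination (-(a + q + v)) * e2 + 4 * e0 + (-(u * (a + q + v))) * hp0)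
      · have hvq' : v = q := by linear_combination hvq
        exact hb q (by linear_combination -e0 - q * hvq')

end Field

/-- In the fraction field of an integrally closed domain, squares of elements of the base
ring have square roots in the base ring. -/
lemma not_sq_frac {R : Type*} [CommRing R] [IsDomain R] [IsIntegrallyClosed R] (r : R)
    (h : ∀ t : R, t ^ 2 ≠ r) : ∀ s : FractionRing R, s ^ 2 ≠ algebraMap R (FractionRing R) r := by
  intro s hs
  have hint : IsIntegral R s := by
    refine ⟨Polynomial.X ^ 2 - Polynomial.C r, Polynomial.monic_X_pow_sub_C r (by norm_num), ?_⟩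
    simp [Polynomial.eval₂_sub, hs]
  obtain ⟨t, ht⟩ := IsIntegrallyClosed.isIntegral_iff.mp hint
  apply h t
  apply IsFractionRing.injective R (FractionRing R)
  rw [map_pow, ht, hs]

noncomputable def pA : MvPolynomial (Fin 2) ℂ :=
  -50 * X 0 ^ 2 + 304 * X 0 * X 1 - 14 * X 1 ^ 2

noncomputable def pB : MvPolynomial (Fin 2) ℂ :=
  -3625 * X 0 ^ 4 + 1590 * X 0 ^ 3 * X 1 + 7129 * X 0 ^ 2 * X 1 ^ 2
    + 8866 * X 0 * X 1 ^ 3 - 8049 * X 1 ^ 4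

noncomputable def pD : MvPolynomial (Fin 2) ℂ :=
  17000 * X 0 ^ 4 - 36760 * X 0 ^ 3 * X 1 + 65300 * X 0 ^ 2 * X 1 ^ 2
    - 43976 * X 0 * X 1 ^ 3 + 32392 * X 1 ^ 4

lemma pD_eq : pA ^ 2 - 4 * pB = pD := by
  unfold pA pB pD; ring

noncomputable def dehom : MvPolynomial (Fin 2) ℂ →ₐ[ℂ] Polynomial ℂ :=
  MvPolynomial.aeval ![Polynomial.X, 1]

lemma dehom_pD : dehom pD = dD := by
  unfold dehom pD dD
  simp only [map_add, map_sub, map_mul, map_pow, map_ofNat, MvPolynomial.aeval_X,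
    Matrix.cons_val_zero, Matrix.cons_val_one, Matrix.head_cons]
  ring

lemma dehom_pB : dehom pB = dB := by
  unfold dehom pB dB
  simp only [map_add, map_sub, map_neg, map_mul, map_pow, map_ofNat, MvPolynomial.aeval_X,
    Matrix.cons_val_zero, Matrix.cons_val_one, Matrix.head_cons]
  ring

lemma pD_not_square : ∀ t : MvPolynomial (Fin 2) ℂ, t ^ 2 ≠ pD := by
  intro t ht
  exact dD_not_square (dehom t) (by rw [← map_pow, ht, dehom_pD])

lemma pB_not_square : ∀ t : MvPolynomial (Fin 2) ℂ, t ^ 2 ≠ pB := by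
  intro t ht
  exact dB_not_square (dehom t) (by rw [← map_pow, ht, dehom_pB])

noncomputable def fR : Polynomial (MvPolynomial (Fin 2) ℂ) :=
  Polynomial.X ^ 4 + Polynomial.C pA * Polynomial.X ^ 2 + Polynomial.C pB

lemma fR_monic : fR.Monic := by
  unfold fR; monicity!

lemma fR_irreducible : Irreducible fR := by
  set R := MvPolynomial (Fin 2) ℂ
  set K := FractionRing R
  rw [fR_monic.irreducible_iff_irreducible_map_fraction_map (K := K)]
  have hmap : fR.map (algebraMap R K)
      = Polynomial.X ^ 4 + Polynomial.C (algebraMap R K pA) * Polynomial.X ^ 2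
        + Polynomial.C (algebraMap R K pB) := by
    unfold fR
    simp [Polynomial.map_add, Polynomial.map_mul, Polynomial.map_pow]
  rw [hmap]
  apply quartic_key
  · intro s
    have : (algebraMap R K pA) ^ 2 - 4 * (algebraMap R K pB) = algebraMap R K pD := by
      rw [← pD_eq]
      simp only [map_sub, map_mul, map_pow, map_ofNat]
    rw [this]
    exact not_sq_frac pD pD_not_square s
  · exact not_sq_frac pB pB_not_square

end SlownessAux

open SlownessAux in
lemma slowness_phi_eq : finSuccEquiv ℂ 2 slownessPolyExample2D = fR := by
  have h1 : (X 1 : MvPolynomial (Fin 3) ℂ) = X (Fin.succ 0) := rfl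
  have h2 : (X 2 : MvPolynomial (Fin 3) ℂ) = X (Fin.succ 1) := rfl
  unfold slownessPolyExample2D fR pA pB
  rw [h1, h2]
  simp only [map_add, map_mul, map_pow, map_neg, map_sub, map_ofNat,
    finSuccEquiv_X_zero, finSuccEquiv_X_succ,
    show ∀ c : ℂ, finSuccEquiv ℂ 2 (C c) = Polynomial.C (C c) from fun c => by
      simp [finSuccEquiv_apply]]
  ring

/-- This explicit homogeneous quartic is irreducible over `ℂ`. -/
theorem slownessPolyExample2D_irreducible : Irreducible slownessPolyExample2D := by
  have h : Irreducible (finSuccEquiv ℂ 2 slownessPolyExample2D) := by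
    rw [slowness_phi_eq]
    exact SlownessAux.fR_irreducible
  exact (MulEquiv.irreducible_iff (finSuccEquiv ℂ 2)).mp h
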